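/- arXiv:2509.08911 — 3 statements merged into one kernel-verified Lean document; each statement's English description precedes it below -/
import Mathlib

section
/- The one-sided Jensen trace inequality fails for the convex function Φ(x) = |x| at level ε = 1: there exist 2×2 Hermitian matrices S and G with ‖G‖_op ≤ 1 such that tr[|S+G|] > tr[((I+G)/2)·|S+I| + ((I−G)/2)·|S−I|]. Concretely, for S = [[0,1],[1,0]] and G = [[1,0],[0,−1]] one has tr[|S+G|] = 2√2 while the right-hand side equals 2. -/
open Matrix

/-- The (Euclidean, i.e. `ℓ²`-operator) norm of a complex `d × d` matrix. -/
noncomputable def opNorm {d : ℕ} (A : Matrix (Fin d) (Fin d) ℂ) : ℝ :=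
  ‖Matrix.toEuclideanCLM (𝕜 := ℂ) A‖

/-- The matrix `S = [[0,1],[1,0]]`. -/
noncomputable def Smat : Matrix (Fin 2) (Fin 2) ℂ := !![0, 1; 1, 0]

/-- The matrix `G = [[1,0],[0,−1]]`. -/
noncomputable def Gmat : Matrix (Fin 2) (Fin 2) ℂ := !![1, 0; 0, -1]

lemma Smat_isHermitian : Smat.IsHermitian := by
  ext i j
  fin_cases i <;> fin_cases j <;>
    simp [Smat, Matrix.conjTranspose_apply]

lemma Gmat_isHermitian : Gmat.IsHermitian := by
  ext i j
  fin_cases i <;> fin_cases j <;>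
    simp [Gmat, Matrix.conjTranspose_apply]

/-- `tr[|S+G|]`, where `|·|` is the spectral absolute value. -/
noncomputable def lhs5 : ℝ :=
  (((Smat_isHermitian.add Gmat_isHermitian).cfc (fun x => |x|)).trace).re

/-- The matrix `((I+G)/2)·|S+I| + ((I−G)/2)·|S−I|`, with `|·|` the spectral absolute value. -/
noncomputable def rhsMat5 : Matrix (Fin 2) (Fin 2) ℂ :=
  (2 : ℝ)⁻¹ • ((1 + Gmat) * ((Smat_isHermitian.add Matrix.isHermitian_one).cfc (fun x => |x|))
    + (1 - Gmat) * ((Smat_isHermitian.sub Matrix.isHermitian_one).cfc (fun x => |x|)))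

/-- `tr[((I+G)/2)·|S+I| + ((I−G)/2)·|S−I|]`. -/
noncomputable def rhs5 : ℝ := (rhsMat5.trace).re

-- auxiliary lemmas

open scoped ComplexOrder in
lemma cfc_abs_of_posSemidef {A : Matrix (Fin 2) (Fin 2) ℂ} (hA : A.PosSemidef) :
    cfc (fun x : ℝ => |x|) A = A := by
  have h1 : cfc (fun x : ℝ => |x|) A = cfc (id : ℝ → ℝ) A := by
    apply cfc_congr
    intro x hx
    rw [hA.1.spectrum_real_eq_range_eigenvalues] at hx
    obtain ⟨i, rfl⟩ := hx
    exact abs_of_nonneg (hA.eigenvalues_nonneg i)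
  exact h1.trans (cfc_id ℝ A hA.1)

open scoped ComplexOrder in
lemma cfc_abs_of_neg_posSemidef {A : Matrix (Fin 2) (Fin 2) ℂ} (hA : (-A).PosSemidef) :
    cfc (fun x : ℝ => |x|) A = -A := by
  have hsa : IsSelfAdjoint A := by
    have := hA.1
    rw [Matrix.IsHermitian, Matrix.conjTranspose_neg, neg_inj] at this
    exact this
  have h1 : cfc (fun x : ℝ => |x|) A = cfc (fun x : ℝ => -x) A := by
    apply cfc_congr
    intro x hx
    have hx' : -x ∈ spectrum ℝ (-A) := by
      rw [← spectrum.neg_eq]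
      exact Set.neg_mem_neg.mpr hx
    rw [hA.1.spectrum_real_eq_range_eigenvalues] at hx'
    obtain ⟨i, hi⟩ := hx'
    have : 0 ≤ -x := hi ▸ hA.eigenvalues_nonneg i
    simp [abs_of_nonpos (by linarith : x ≤ 0)]
  rw [h1, cfc_neg (fun x : ℝ => x) A, cfc_id' ℝ A hsa]

lemma abs_SG : ((Smat_isHermitian.add Gmat_isHermitian).cfc (fun x => |x|))
    = Real.sqrt 2 • (1 : Matrix (Fin 2) (Fin 2) ℂ) := by
  rw [← Matrix.IsHermitian.cfc_eq]
  have hsa : IsSelfAdjoint (Smat + Gmat) := Smat_isHermitian.add Gmat_isHermitian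
  have hX2 : (Smat + Gmat) ^ 2 = algebraMap ℝ (Matrix (Fin 2) (Fin 2) ℂ) 2 := by
    rw [Algebra.algebraMap_eq_smul_one]
    ext i j
    fin_cases i <;> fin_cases j <;>
      simp [Smat, Gmat, pow_two, Matrix.mul_apply, Fin.sum_univ_two, Matrix.one_apply] <;> norm_num
  calc cfc (fun x : ℝ => |x|) (Smat + Gmat)
      = cfc (Real.sqrt ∘ (fun x : ℝ => x ^ 2)) (Smat + Gmat) := by
        apply cfc_congr; intro x _; simp [Real.sqrt_sq_eq_abs]
    _ = cfc Real.sqrt (cfc (fun x : ℝ => x ^ 2) (Smat + Gmat)) := by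
        apply cfc_comp _ _ _ hsa
    _ = cfc Real.sqrt ((Smat + Gmat) ^ 2) := by rw [cfc_pow_id _ _ hsa]
    _ = algebraMap ℝ (Matrix (Fin 2) (Fin 2) ℂ) (Real.sqrt 2) := by
        rw [hX2, cfc_algebraMap]
    _ = Real.sqrt 2 • 1 := Algebra.algebraMap_eq_smul_one _

open scoped ComplexOrder in
lemma absSI : ((Smat_isHermitian.add Matrix.isHermitian_one).cfc (fun x => |x|))
    = Smat + 1 := by
  rw [← Matrix.IsHermitian.cfc_eq]
  apply cfc_abs_of_posSemidef
  have h : Smat + 1 = (!![1, 1; 0, 0] : Matrix (Fin 2) (Fin 2) ℂ)ᴴ * !![1, 1; 0, 0] := by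
    ext i j
    fin_cases i <;> fin_cases j <;>
      simp [Smat, Matrix.mul_apply, Fin.sum_univ_two, Matrix.one_apply]
  rw [h]
  exact Matrix.posSemidef_conjTranspose_mul_self _

open scoped ComplexOrder in
lemma absSmI : ((Smat_isHermitian.sub Matrix.isHermitian_one).cfc (fun x => |x|))
    = -(Smat - 1) := by
  rw [← Matrix.IsHermitian.cfc_eq]
  apply cfc_abs_of_neg_posSemidef
  have h : -(Smat - 1) = (!![1, -1; 0, 0] : Matrix (Fin 2) (Fin 2) ℂ)ᴴ * !![1, -1; 0, 0] := by
    ext i j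
    fin_cases i <;> fin_cases j <;>
      simp [Smat, Matrix.mul_apply, Fin.sum_univ_two, Matrix.one_apply]
  rw [h]
  exact Matrix.posSemidef_conjTranspose_mul_self _

lemma rhsMat5_eq : rhsMat5 = !![1, 1; -1, 1] := by
  rw [rhsMat5, absSI, absSmI]
  ext i j
  fin_cases i <;> fin_cases j <;>
    simp [Smat, Gmat, Matrix.mul_apply, Fin.sum_univ_two, Matrix.one_apply] <;> norm_num

/-- **The one-sided Jensen trace inequality fails for the convex function `Φ(x) = |x|`
at level `ε = 1`.** For `S = [[0,1],[1,0]]` and `G = [[1,0],[0,−1]]` one has `‖G‖_op ≤ 1`,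
`tr[|S+G|] = 2√2`, `tr[((I+G)/2)·|S+I| + ((I−G)/2)·|S−I|] = 2`, hence `RHS < LHS`. -/
theorem stmt_5 : opNorm Gmat ≤ 1 ∧ lhs5 = 2 * Real.sqrt 2 ∧ rhs5 = 2 ∧ rhs5 < lhs5 := by
  have hlhs : lhs5 = 2 * Real.sqrt 2 := by
    rw [lhs5, abs_SG]
    simp [Matrix.trace, Fin.sum_univ_two, Matrix.one_apply]
    try ring
  have hrhs : rhs5 = 2 := by
    rw [rhs5, rhsMat5_eq]
    norm_num [Matrix.trace, Fin.sum_univ_two]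
  refine ⟨?_, hlhs, hrhs, ?_⟩
  · have hg : star (Matrix.toEuclideanCLM (𝕜 := ℂ) Gmat) * Matrix.toEuclideanCLM (𝕜 := ℂ) Gmat = 1 := by
      rw [← map_star, ← _root_.map_mul, ← _root_.map_one (Matrix.toEuclideanCLM (𝕜 := ℂ))]
      congr 1
      ext i j
      fin_cases i <;> fin_cases j <;>
        simp [Gmat, Matrix.mul_apply, Fin.sum_univ_two, Matrix.one_apply]
    have hn : ‖Matrix.toEuclideanCLM (𝕜 := ℂ) Gmat‖ * ‖Matrix.toEuclideanCLM (𝕜 := ℂ) Gmat‖ = 1 := by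
      rw [← CStarRing.norm_star_mul_self, hg, norm_one]
    rw [opNorm]
    nlinarith [norm_nonneg (Matrix.toEuclideanCLM (𝕜 := ℂ) Gmat)]
  · rw [hlhs, hrhs]
    nlinarith [Real.sq_sqrt (by norm_num : (2:ℝ) ≥ 0), Real.sqrt_nonneg 2]
end

section
/- Let ε > 0 and for each t ∈ ℕ₊ let Φ_t : ℝ → ℝ be convex and satisfy: (1) for all t ≥ 1 and s ∈ ℝ, (1/2)[Φ_{t+1}(s+ε) + Φ_{t+1}(s−ε)] ≤ Φ_t(s); and (2) for all t ≥ 1 and all d×d Hermitian S, G with ‖G‖_op ≤ ε, tr[Φ_t(S−G)] ≤ tr[((εI−G)/(2ε))Φ_t(S+εI) + ((εI+G)/(2ε))Φ_t(S−εI)]. Given any sequence of d×d Hermitian loss matrices G₁, G₂, … with ‖G_t‖_op ≤ ε, define S₁ = 0, S_{t+1} = S_t − G_t, and X_t = (1/(2ε))[Φ_t(S_t+εI) − Φ_t(S_t−εI)]. Then for all T ≥ 2 and every d×d Hermitian X with eigenvalues λ₁,…,λ_d: ∑_{t=1}^{T} ⟨G_t, X_t − X⟩ ≤ ⟨G₁,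 X₁⟩ + tr[Φ₁(−G₁)] + ∑_{i=1}^{d} Φ*_T(λᵢ), where Φ*_T(λ) := sup_{g∈ℝ}[gλ − Φ_T(g)] is the Fenchel conjugate of Φ_T and ⟨A,B⟩ = tr(AB) is the Frobenius inner product. -/
open Matrix

/-- The real Frobenius inner product `⟨A, B⟩ = tr(AB)` of Hermitian matrices. -/
noncomputable def frobInner {d : ℕ} (A B : Matrix (Fin d) (Fin d) ℂ) : ℝ :=
  ((A * B).trace).re

lemma isHermitian_smul_one {d : ℕ} (r : ℝ) :
    (r • (1 : Matrix (Fin d) (Fin d) ℂ)).IsHermitian := by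
  simp [Matrix.IsHermitian, Matrix.conjTranspose_smul]

/-! ### Auxiliary lemmas -/


lemma trace_cfc'' {d : ℕ} {A : Matrix (Fin d) (Fin d) ℂ} (hA : A.IsHermitian) (f : ℝ → ℝ) :
    (hA.cfc f).trace = ∑ i, (f (hA.eigenvalues i) : ℂ) := by
  rw [Matrix.IsHermitian.cfc, Unitary.conjStarAlgAut_apply, Matrix.trace_mul_cycle]
  rw [show (star (hA.eigenvectorUnitary : Matrix (Fin d) (Fin d) ℂ)) *
      (hA.eigenvectorUnitary : Matrix (Fin d) (Fin d) ℂ) = 1 from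
    Unitary.star_mul_self_of_mem (SetLike.coe_mem _), one_mul, Matrix.trace_diagonal]
  rfl

lemma trace_cfc_re {d : ℕ} {A : Matrix (Fin d) (Fin d) ℂ} (hA : A.IsHermitian) (f : ℝ → ℝ) :
    ((hA.cfc f).trace).re = ∑ i, f (hA.eigenvalues i) := by
  rw [trace_cfc'', ← Complex.ofReal_sum, Complex.ofReal_re]

lemma eig_sum_congr {d : ℕ} {A B : Matrix (Fin d) (Fin d) ℂ} (h : A = B)
    (hA : A.IsHermitian) (hB : B.IsHermitian) (f : ℝ → ℝ) :
    ∑ i, f (hA.eigenvalues i) = ∑ i, f (hB.eigenvalues i) := by subst h; rfl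

lemma contOnFin {d : ℕ} (A : Matrix (Fin d) (Fin d) ℂ) (f : ℝ → ℝ) {s : Set ℝ}
    (hs : s ⊆ spectrum ℝ A) : ContinuousOn f s :=
  ((Matrix.finite_real_spectrum (A := A)).subset hs).continuousOn f

lemma trace_cfc_shift {d : ℕ} {A : Matrix (Fin d) (Fin d) ℂ} (hA : A.IsHermitian) (r : ℝ)
    (f : ℝ → ℝ) :
    ((hA.add (isHermitian_smul_one r)).cfc f).trace = ∑ i, (f (hA.eigenvalues i + r) : ℂ) := by
  have hsa : IsSelfAdjoint A := hA
  have h1 : A + r • (1 : Matrix (Fin d) (Fin d) ℂ) = cfc (fun x : ℝ => x + r) A := by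
    rw [cfc_add_const r (fun x => x) A (contOnFin A _ le_rfl) hsa, cfc_id' ℝ A,
      Algebra.algebraMap_eq_smul_one]
  rw [← Matrix.IsHermitian.cfc_eq]
  conv_lhs => rw [h1]
  rw [← cfc_comp f (fun x : ℝ => x + r) A hsa
    (((Matrix.finite_real_spectrum (A := A)).image _).continuousOn f)
    (contOnFin A _ le_rfl)]
  rw [Matrix.IsHermitian.cfc_eq (hA := hA), trace_cfc'' hA _]
  rfl

lemma trace_cfc_shift_re {d : ℕ} {A : Matrix (Fin d) (Fin d) ℂ} (hA : A.IsHermitian) (r : ℝ)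
    (f : ℝ → ℝ) :
    (((hA.add (isHermitian_smul_one r)).cfc f).trace).re = ∑ i, f (hA.eigenvalues i + r) := by
  rw [trace_cfc_shift, ← Complex.ofReal_sum, Complex.ofReal_re]

lemma cfc_congr_mat {d : ℕ} {A B : Matrix (Fin d) (Fin d) ℂ} (h : A = B)
    (hA : A.IsHermitian) (hB : B.IsHermitian) (f : ℝ → ℝ) : hA.cfc f = hB.cfc f := by
  subst h; rfl

lemma trace_cfc_shift_sub_re {d : ℕ} {A : Matrix (Fin d) (Fin d) ℂ} (hA : A.IsHermitian) (r : ℝ)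
    (f : ℝ → ℝ) :
    (((hA.sub (isHermitian_smul_one r)).cfc f).trace).re = ∑ i, f (hA.eigenvalues i - r) := by
  have h : A - r • (1 : Matrix (Fin d) (Fin d) ℂ)
      = A + (-r) • (1 : Matrix (Fin d) (Fin d) ℂ) := by
    rw [neg_smul, ← sub_eq_add_neg]
  rw [cfc_congr_mat h (hA.sub (isHermitian_smul_one r)) (hA.add (isHermitian_smul_one (-r))) f,
    trace_cfc_shift_re hA (-r) f]
  simp [sub_eq_add_neg]

lemma trace_mul_diag {d : ℕ} (M : Matrix (Fin d) (Fin d) ℂ) (v : Fin d → ℂ) :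
    (M * diagonal v).trace = ∑ i, M i i * v i := by
  simp [Matrix.trace, Matrix.diag, Matrix.mul_diagonal]

lemma star_mul_real (z : ℂ) (r : ℝ) : star z * (r : ℂ) * z = (Complex.normSq z : ℂ) * r := by
  have : star z * (r : ℂ) * z = z * star z * r := by ring
  rw [this, Complex.star_def, Complex.mul_conj]

lemma star_self_eq (z : ℂ) : star z * z = (Complex.normSq z : ℂ) := by
  rw [Complex.star_def, mul_comm, Complex.mul_conj]

lemma self_star_eq (z : ℂ) : z * star z = (Complex.normSq z : ℂ) := by
  rw [Complex.star_def, Complex.mul_conj]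

lemma fenchel_aux {d : ℕ} (S Xc : Matrix (Fin d) (Fin d) ℂ)
    (hS : S.IsHermitian) (hXc : Xc.IsHermitian) (f : ℝ → ℝ)
    (hf : ConvexOn ℝ Set.univ f) :
    ∃ g : Fin d → ℝ, ((S * Xc).trace).re = ∑ i, g i * hXc.eigenvalues i ∧
      ∑ i, f (g i) ≤ ∑ i, f (hS.eigenvalues i) := by
  set U : Matrix (Fin d) (Fin d) ℂ := (hS.eigenvectorUnitary : Matrix (Fin d) (Fin d) ℂ) with hU
  set V : Matrix (Fin d) (Fin d) ℂ := (hXc.eigenvectorUnitary : Matrix (Fin d) (Fin d) ℂ) with hV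
  set W : Matrix (Fin d) (Fin d) ℂ := star U * V with hW
  have hUU : U * star U = 1 := (Matrix.mem_unitaryGroup_iff).mp (hS.eigenvectorUnitary).2
  have hUU' : star U * U = 1 := (Matrix.mem_unitaryGroup_iff').mp (hS.eigenvectorUnitary).2
  have hVV : V * star V = 1 := (Matrix.mem_unitaryGroup_iff).mp (hXc.eigenvectorUnitary).2
  have hVV' : star V * V = 1 := (Matrix.mem_unitaryGroup_iff').mp (hXc.eigenvectorUnitary).2
  have hWs : star W = star V * U := by rw [hW, StarMul.star_mul, star_star]
  have hWsW : star W * W = 1 := by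
    rw [hWs, hW, mul_assoc, ← mul_assoc U _ _, hUU, one_mul, hVV']
  have hWWs : W * star W = 1 := by
    rw [hWs, hW, mul_assoc, ← mul_assoc V _ _, hVV, one_mul, hUU']
  have hcol : ∀ i, ∑ j, Complex.normSq (W j i) = 1 := by
    intro i
    have h2 : (star W * W) i i = ((∑ j, Complex.normSq (W j i) : ℝ) : ℂ) := by
      push_cast
      rw [Matrix.mul_apply]
      congr 1; ext j
      rw [Matrix.star_apply, star_self_eq]
    have h3 : ((∑ j, Complex.normSq (W j i) : ℝ) : ℂ) = 1 := by rw [← h2, hWsW]; simp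
    exact_mod_cast h3
  have hrow : ∀ j, ∑ i, Complex.normSq (W j i) = 1 := by
    intro j
    have h2 : (W * star W) j j = ((∑ i, Complex.normSq (W j i) : ℝ) : ℂ) := by
      push_cast
      rw [Matrix.mul_apply]
      congr 1; ext i
      rw [Matrix.star_apply, self_star_eq]
    have h3 : ((∑ i, Complex.normSq (W j i) : ℝ) : ℂ) = 1 := by rw [← h2, hWWs]; simp
    exact_mod_cast h3
  set g : Fin d → ℝ := fun i => ∑ j, Complex.normSq (W j i) * hS.eigenvalues j with hg
  have hkey : ∀ i, (star V * S * V) i i = ((g i : ℝ) : ℂ) := by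
    intro i
    have hrw : star V * S * V
        = star W * diagonal ((fun r : ℝ => (r : ℂ)) ∘ hS.eigenvalues) * W := by
      conv_lhs => rw [hS.spectral_theorem, Unitary.conjStarAlgAut_apply]
      rw [hWs, hW]
      simp only [mul_assoc]
      rfl
    rw [hrw, hg]
    push_cast
    rw [Matrix.mul_apply]
    refine Finset.sum_congr rfl fun j _ => ?_
    rw [Matrix.mul_diagonal, Matrix.star_apply, Function.comp_apply, star_mul_real]
  have htr : (S * Xc).trace = ((∑ i, g i * hXc.eigenvalues i : ℝ) : ℂ) := by
    conv_lhs => rw [hXc.spectral_theorem, Unitary.conjStarAlgAut_apply]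
    rw [show S * ((hXc.eigenvectorUnitary : Matrix (Fin d) (Fin d) ℂ) *
        diagonal (RCLike.ofReal ∘ hXc.eigenvalues)
          * star (hXc.eigenvectorUnitary : Matrix (Fin d) (Fin d) ℂ))
        = (S * V * diagonal (RCLike.ofReal ∘ hXc.eigenvalues)) * star V by
      rw [hV]; simp only [mul_assoc]]
    rw [Matrix.trace_mul_comm, ← Matrix.mul_assoc, ← Matrix.mul_assoc, trace_mul_diag]
    push_cast
    congr 1; ext i
    rw [hkey i]
    ring_nf
    rfl
  refine ⟨g, by rw [htr]; exact Complex.ofReal_re _, ?_⟩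
  calc ∑ i, f (g i)
      ≤ ∑ i, ∑ j, Complex.normSq (W j i) * f (hS.eigenvalues j) := by
        refine Finset.sum_le_sum fun i _ => ?_
        have := hf.map_sum_le (t := Finset.univ) (w := fun j => Complex.normSq (W j i))
          (p := fun j => hS.eigenvalues j)
          (fun j _ => Complex.normSq_nonneg _) (hcol i) (fun j _ => Set.mem_univ _)
        simpa [hg, smul_eq_mul] using this
    _ = ∑ j, (∑ i, Complex.normSq (W j i)) * f (hS.eigenvalues j) := by
        rw [Finset.sum_comm]; simp [Finset.sum_mul]
    _ = ∑ j, f (hS.eigenvalues j) := by simp [hrow]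

lemma frobInner_sub {d : ℕ} (A B C : Matrix (Fin d) (Fin d) ℂ) :
    frobInner A (B - C) = frobInner A B - frobInner A C := by
  simp [frobInner, mul_sub, Matrix.trace_sub, Complex.sub_re]

lemma frobInner_sum_left {d : ℕ} (s : Finset ℕ) (A : ℕ → Matrix (Fin d) (Fin d) ℂ)
    (B : Matrix (Fin d) (Fin d) ℂ) :
    ∑ t ∈ s, frobInner (A t) B = frobInner (∑ t ∈ s, A t) B := by
  simp [frobInner, Finset.sum_mul, Matrix.trace_sum, Complex.re_sum]

lemma frobInner_neg_left {d : ℕ} (A B : Matrix (Fin d) (Fin d) ℂ) :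
    frobInner (-A) B = - frobInner A B := by
  simp [frobInner, Matrix.trace_neg]

/-- **Master regret bound for the matrix potential method.**
If the convex potentials `Φ_t` satisfy the one-dimensional recursion
`(Φ_{t+1}(s+ε) + Φ_{t+1}(s−ε))/2 ≤ Φ_t(s)` and the one-sided Jensen trace inequality, then the
iterates `S₁ = 0`, `S_{t+1} = S_t − G_t`, `X_t = (1/(2ε))[Φ_t(S_t+εI) − Φ_t(S_t−εI)]` satisfy,
for every `T ≥ 2` and Hermitian comparator `X` with eigenvalues `λ₁, …, λ_d`,
`∑_{t=1}^T ⟨G_t, X_t − X⟩ ≤ ⟨G₁, X₁⟩ + tr[Φ₁(−G₁)] + ∑ᵢ Φ*_T(λᵢ)`, where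
`Φ*_T(λ) = sup_g (gλ − Φ_T(g))` is the Fenchel conjugate (valued in `EReal`). -/
theorem stmt_11 (d : ℕ) (ε : ℝ) (hε : 0 < ε) (Φ : ℕ → ℝ → ℝ)
    (hconv : ∀ t, 1 ≤ t → ConvexOn ℝ Set.univ (Φ t))
    (hcond1 : ∀ t, 1 ≤ t → ∀ s : ℝ, (Φ (t + 1) (s + ε) + Φ (t + 1) (s - ε)) / 2 ≤ Φ t s)
    (hcond2 : ∀ t, 1 ≤ t → ∀ (S G : Matrix (Fin d) (Fin d) ℂ)
        (hS : S.IsHermitian) (hG : G.IsHermitian), opNorm G ≤ ε →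
        (((hS.sub hG).cfc (Φ t)).trace).re ≤
          (((2 * ε)⁻¹ • ((ε • (1 : Matrix (Fin d) (Fin d) ℂ) - G) *
                ((hS.add (isHermitian_smul_one ε)).cfc (Φ t))
              + (ε • (1 : Matrix (Fin d) (Fin d) ℂ) + G) *
                ((hS.sub (isHermitian_smul_one ε)).cfc (Φ t)))).trace).re)
    (G : ℕ → Matrix (Fin d) (Fin d) ℂ)
    (hGherm : ∀ t, (G t).IsHermitian) (hGle : ∀ t, opNorm (G t) ≤ ε)
    (Smat : ℕ → Matrix (Fin d) (Fin d) ℂ)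
    (hSherm : ∀ t, (Smat t).IsHermitian)
    (hS1 : Smat 1 = 0) (hSrec : ∀ t, 1 ≤ t → Smat (t + 1) = Smat t - G t)
    (X : ℕ → Matrix (Fin d) (Fin d) ℂ)
    (hX : ∀ t, 1 ≤ t → X t = (2 * ε)⁻¹ •
        (((hSherm t).add (isHermitian_smul_one ε)).cfc (Φ t)
          - ((hSherm t).sub (isHermitian_smul_one ε)).cfc (Φ t)))
    (T : ℕ) (hT : 2 ≤ T)
    (Xc : Matrix (Fin d) (Fin d) ℂ) (hXc : Xc.IsHermitian) :
    ((∑ t ∈ Finset.Icc 1 T, frobInner (G t) (X t - Xc) : ℝ) : EReal) ≤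
      ((frobInner (G 1) (X 1) + ((((hGherm 1).neg).cfc (Φ 1)).trace).re : ℝ) : EReal)
        + ∑ i : Fin d, ⨆ g : ℝ, ((g * hXc.eigenvalues i - Φ T g : ℝ) : EReal) := by
  have hε2 : (2 * ε) ≠ 0 := by positivity
  set F : ℕ → ℝ := fun t => ∑ i, Φ t ((hSherm (t + 1)).eigenvalues i) with hF
  set C : ℝ := ((((hGherm 1).neg).cfc (Φ 1)).trace).re with hC
  -- step inequality
  have hstep : ∀ t, 1 ≤ t → frobInner (G t) (X t) + F t ≤
      ∑ i, (Φ t ((hSherm t).eigenvalues i + ε) + Φ t ((hSherm t).eigenvalues i - ε)) / 2 := by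
    intro t ht
    have h2 := hcond2 t ht (Smat t) (G t) (hSherm t) (hGherm t) (hGle t)
    set P := ((hSherm t).add (isHermitian_smul_one ε)).cfc (Φ t) with hP
    set M := ((hSherm t).sub (isHermitian_smul_one ε)).cfc (Φ t) with hM
    -- LHS of h2 is F t
    have hL : ((((hSherm t).sub (hGherm t)).cfc (Φ t)).trace).re = F t := by
      rw [trace_cfc_re, hF]
      exact eig_sum_congr (hSrec t ht).symm _ _ _
    -- RHS of h2
    have hKmat : (ε • (1 : Matrix (Fin d) (Fin d) ℂ) - G t) * P
        + (ε • (1 : Matrix (Fin d) (Fin d) ℂ) + G t) * M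
        = ε • (P + M) - G t * (P - M) := by
      simp only [sub_mul, add_mul, smul_mul_assoc, one_mul, mul_sub, smul_add]
      abel
    set c : ℝ := ((G t * (P - M)).trace).re with hc
    have hR : (((2 * ε)⁻¹ • ((ε • (1 : Matrix (Fin d) (Fin d) ℂ) - G t) * P
        + (ε • (1 : Matrix (Fin d) (Fin d) ℂ) + G t) * M)).trace).re
        = (2 * ε)⁻¹ * (ε * ((P.trace).re + (M.trace).re) - c) := by
      rw [hKmat, Matrix.trace_smul, Complex.smul_re, Matrix.trace_sub, Matrix.trace_smul,
        Complex.sub_re, Complex.smul_re, Matrix.trace_add, Complex.add_re]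
      simp [hc, smul_eq_mul]
    have hfrob : frobInner (G t) (X t) = (2 * ε)⁻¹ * c := by
      rw [hX t ht, ← hP, ← hM, frobInner, mul_smul_comm, Matrix.trace_smul, Complex.smul_re,
        hc, smul_eq_mul]
    have hPtr : (P.trace).re = ∑ i, Φ t ((hSherm t).eigenvalues i + ε) :=
      trace_cfc_shift_re (hSherm t) ε (Φ t)
    have hMtr : (M.trace).re = ∑ i, Φ t ((hSherm t).eigenvalues i - ε) :=
      trace_cfc_shift_sub_re (hSherm t) ε (Φ t)
    rw [hL, hR, hPtr, hMtr] at h2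
    rw [hfrob]
    have hhalf : (2 * ε)⁻¹ * (ε * ((∑ i, Φ t ((hSherm t).eigenvalues i + ε))
        + ∑ i, Φ t ((hSherm t).eigenvalues i - ε)) - c)
        = ((∑ i, Φ t ((hSherm t).eigenvalues i + ε))
          + ∑ i, Φ t ((hSherm t).eigenvalues i - ε)) / 2 - (2 * ε)⁻¹ * c := by
      field_simp
    rw [hhalf] at h2
    have hsum : ∑ i, (Φ t ((hSherm t).eigenvalues i + ε)
        + Φ t ((hSherm t).eigenvalues i - ε)) / 2
        = ((∑ i, Φ t ((hSherm t).eigenvalues i + ε))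
          + ∑ i, Φ t ((hSherm t).eigenvalues i - ε)) / 2 := by
      rw [← Finset.sum_add_distrib, Finset.sum_div]
    rw [hsum]
    linarith
  -- link inequality
  have hlink : ∀ t, 1 ≤ t →
      ∑ i, (Φ (t+1) ((hSherm (t+1)).eigenvalues i + ε)
        + Φ (t+1) ((hSherm (t+1)).eigenvalues i - ε)) / 2 ≤ F t := by
    intro t ht
    exact Finset.sum_le_sum fun i _ => hcond1 t ht _
  -- main induction
  have hmain : ∀ t, 1 ≤ t →
      ∑ s ∈ Finset.Icc 1 t, frobInner (G s) (X s) + F t ≤ frobInner (G 1) (X 1) + C := by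
    intro t ht
    induction t, ht using Nat.le_induction with
    | base =>
      rw [Finset.Icc_self, Finset.sum_singleton]
      have hF1 : F 1 = C := by
        rw [hF, hC, trace_cfc_re]
        exact eig_sum_congr (by rw [hSrec 1 le_rfl, hS1, zero_sub]) _ _ _
      rw [hF1]
    | succ t ht ih =>
      rw [Finset.sum_Icc_succ_top (by omega : 1 ≤ t + 1)]
      have h1 := hstep (t+1) (by omega)
      have h2 := hlink t ht
      linarith
  -- sum of the G's
  have hGsum : ∀ t, 1 ≤ t → Smat (t + 1) = - ∑ s ∈ Finset.Icc 1 t, G s := by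
    intro t ht
    induction t, ht using Nat.le_induction with
    | base => rw [Finset.Icc_self, Finset.sum_singleton, hSrec 1 le_rfl, hS1, zero_sub]
    | succ t ht ih =>
      rw [Finset.sum_Icc_succ_top (by omega : 1 ≤ t + 1), hSrec (t+1) (by omega), ih]
      abel
  -- Fenchel step
  obtain ⟨g, hg1, hg2⟩ := fenchel_aux (Smat (T+1)) Xc (hSherm (T+1)) hXc (Φ T)
    (hconv T (by omega))
  -- real-valued chain
  have hreal : ∑ t ∈ Finset.Icc 1 T, frobInner (G t) (X t - Xc)
      ≤ frobInner (G 1) (X 1) + C + ∑ i, (g i * hXc.eigenvalues i - Φ T (g i)) := by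
    have hdecomp : ∑ t ∈ Finset.Icc 1 T, frobInner (G t) (X t - Xc)
        = ∑ t ∈ Finset.Icc 1 T, frobInner (G t) (X t) + frobInner (Smat (T+1)) Xc := by
      rw [show ∀ s : Finset ℕ, ∑ t ∈ s, frobInner (G t) (X t - Xc)
          = ∑ t ∈ s, (frobInner (G t) (X t) - frobInner (G t) Xc) from
        fun s => Finset.sum_congr rfl fun t _ => frobInner_sub _ _ _]
      rw [Finset.sum_sub_distrib, frobInner_sum_left]
      have : (∑ t ∈ Finset.Icc 1 T, G t) = - Smat (T+1) := by
        rw [hGsum T (by omega)]; simp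
      rw [this, frobInner_neg_left]
      ring
    have hFT : ∑ i, Φ T (g i) ≤ F T := hg2
    have hfrobS : frobInner (Smat (T+1)) Xc = ∑ i, g i * hXc.eigenvalues i := hg1
    have := hmain T (by omega)
    rw [hdecomp, hfrobS]
    have hsplit : ∑ i, (g i * hXc.eigenvalues i - Φ T (g i))
        = (∑ i, g i * hXc.eigenvalues i) - ∑ i, Φ T (g i) := Finset.sum_sub_distrib _ _
    linarith
  -- pass to EReal
  have hcoe : ∀ (s : Finset (Fin d)) (f : Fin d → ℝ),
      ((∑ i ∈ s, f i : ℝ) : EReal) = ∑ i ∈ s, ((f i : ℝ) : EReal) :=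
    fun s f => map_sum (⟨⟨Real.toEReal, EReal.coe_zero⟩, EReal.coe_add⟩ : ℝ →+ EReal) f s
  calc ((∑ t ∈ Finset.Icc 1 T, frobInner (G t) (X t - Xc) : ℝ) : EReal)
      ≤ ((frobInner (G 1) (X 1) + C + ∑ i, (g i * hXc.eigenvalues i - Φ T (g i)) : ℝ) : EReal) :=
        EReal.coe_le_coe_iff.mpr hreal
    _ = ((frobInner (G 1) (X 1) + C : ℝ) : EReal)
        + ((∑ i, (g i * hXc.eigenvalues i - Φ T (g i)) : ℝ) : EReal) := EReal.coe_add _ _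
    _ ≤ ((frobInner (G 1) (X 1) + C : ℝ) : EReal)
        + ∑ i : Fin d, ⨆ gg : ℝ, ((gg * hXc.eigenvalues i - Φ T gg : ℝ) : EReal) := by
        refine add_le_add le_rfl ?_
        rw [hcoe]
        refine Finset.sum_le_sum fun i _ => ?_
        exact le_iSup (fun gg : ℝ => ((gg * hXc.eigenvalues i - Φ T gg : ℝ) : EReal)) (g i)
end

section
/- Let d ≥ 1 and let λ₁,…,λ_d ≥ 0 satisfy ∑_{i=1}^{d} λᵢ = 1. Then ∑_{i=1}^{d} λᵢ·√(log(1 + λᵢ·d)) ≤ √(1 + ∑_{i=1}^{d} λᵢ·log(λᵢ·d)), where terms with λᵢ = 0 are interpreted as 0. Equivalently, for X in the spectraplex Δ_{d×d} with eigenvalues λ₁,…,λ_d, one has ∑ᵢ λᵢ√(log(1+λᵢd)) ≤ √(1 + S(X‖d⁻¹I_d)). -/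
/-- **Entropy-type Cauchy–Schwarz bound on the spectrum of a density matrix.**
If `λ₁,…,λ_d ≥ 0` sum to `1`, then
`∑ᵢ λᵢ·√(log(1 + λᵢd)) ≤ √(1 + ∑ᵢ λᵢ·log(λᵢd))`; the right-hand sum is the quantum
relative entropy `S(X‖d⁻¹I_d)` of a state with spectrum `λ₁,…,λ_d` (terms with `λᵢ = 0`
vanish, automatically since `Real.log 0 = 0`). -/
theorem stmt_18 (d : ℕ) (hd : 1 ≤ d) (lam : Fin d → ℝ)
    (hnonneg : ∀ i, 0 ≤ lam i) (hsum : ∑ i, lam i = 1) :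
    ∑ i, lam i * Real.sqrt (Real.log (1 + lam i * d)) ≤
      Real.sqrt (1 + ∑ i, lam i * Real.log (lam i * d)) := by
  have hdpos : (0:ℝ) < d := by exact_mod_cast hd
  have hlognn : ∀ i, 0 ≤ Real.log (1 + lam i * d) := by
    intro i
    apply Real.log_nonneg
    nlinarith [hnonneg i]
  -- Cauchy–Schwarz step
  have hCS : ∑ i, lam i * Real.sqrt (Real.log (1 + lam i * d)) ≤
      Real.sqrt (∑ i, lam i) * Real.sqrt (∑ i, lam i * Real.log (1 + lam i * d)) := by
    have := Real.sum_sqrt_mul_sqrt_le (f := lam)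
      (g := fun i => lam i * Real.log (1 + lam i * d)) Finset.univ
      hnonneg (fun i => mul_nonneg (hnonneg i) (hlognn i))
    calc ∑ i, lam i * Real.sqrt (Real.log (1 + lam i * d))
        = ∑ i, Real.sqrt (lam i) * Real.sqrt (lam i * Real.log (1 + lam i * d)) := by
          refine Finset.sum_congr rfl fun i _ => ?_
          rw [Real.sqrt_mul (hnonneg i), ← mul_assoc, Real.mul_self_sqrt (hnonneg i)]
      _ ≤ _ := this
  rw [hsum, Real.sqrt_one, one_mul] at hCS
  refine hCS.trans (Real.sqrt_le_sqrt ?_)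
  -- pointwise: λ log(1+λd) ≤ 1/d + λ log(λd)
  have hpt : ∀ i, lam i * Real.log (1 + lam i * d) ≤ 1/d + lam i * Real.log (lam i * d) := by
    intro i
    rcases (hnonneg i).eq_or_lt with h | h
    · simp [← h]
    · have hx : 0 < lam i * d := mul_pos h hdpos
      have key : Real.log (1 + lam i * d) ≤ 1 / (lam i * d) + Real.log (lam i * d) := by
        have h1 : Real.log (1 + lam i * d) - Real.log (lam i * d)
            = Real.log ((1 + lam i * d) / (lam i * d)) := by
          rw [Real.log_div (by positivity) (ne_of_gt hx)]
        have h2 : Real.log ((1 + lam i * d) / (lam i * d)) ≤ (1 + lam i * d) / (lam i * d) - 1 :=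
          Real.log_le_sub_one_of_pos (by positivity)
        have h3 : (1 + lam i * d) / (lam i * d) - 1 = 1 / (lam i * d) := by
          field_simp
          ring
        linarith
      have := mul_le_mul_of_nonneg_left key (hnonneg i)
      calc lam i * Real.log (1 + lam i * d)
          ≤ lam i * (1 / (lam i * d) + Real.log (lam i * d)) := this
        _ = 1/d + lam i * Real.log (lam i * d) := by field_simp
  calc ∑ i, lam i * Real.log (1 + lam i * d)
      ≤ ∑ i : Fin d, (1/d + lam i * Real.log (lam i * d)) :=
        Finset.sum_le_sum fun i _ => hpt i
    _ = 1 + ∑ i, lam i * Real.log (lam i * d) := by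
        rw [Finset.sum_add_distrib, Finset.sum_const, Finset.card_univ, Fintype.card_fin]
        field_simp
        rw [nsmul_eq_mul, mul_one_div_cancel hdpos.ne']
end
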